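/- A finite p-group G belongs to C₃ (i.e. ∑_{H ⊴ G} |H| ≤ 2|G|) if and only if G is cyclic. -/

import Mathlib

open Subgroup Finset
open scoped commutatorElement

section Aux

lemma coatom_facts' {p : ℕ} (hp : p.Prime) {G : Type*} [Group G] [Finite G]
    (h : IsPGroup p G) {M : Subgroup G} (hM : IsCoatom M) :
    ∀ g : G, g ^ p ∈ M ∧ ∀ g' : G, ⁅g, g'⁆ ∈ M := by
  haveI : Fact p.Prime := ⟨hp⟩
  haveI : Group.IsNilpotent G := h.isNilpotent
  have hMn : M.Normal :=
    Subgroup.NormalizerCondition.normal_of_coatom M normalizerCondition_of_isNilpotent hM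
  set π := QuotientGroup.mk' M with hπ
  have hsurj : Function.Surjective π := QuotientGroup.mk'_surjective M
  have hQp : IsPGroup p (G ⧸ M) := h.to_quotient M
  have hnt : Nontrivial (G ⧸ M) := by
    obtain ⟨g, hg⟩ : ∃ g : G, g ∉ M := by
      by_contra hc
      push_neg at hc
      exact hM.1 (top_unique fun x _ => hc x)
    refine ⟨π g, 1, fun e => hg ?_⟩
    exact (QuotientGroup.eq_one_iff g).1 e
  have hdvd : p ∣ Nat.card (G ⧸ M) := by
    obtain ⟨n, hn⟩ := (IsPGroup.iff_card (p := p)).mp hQp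
    rcases n with _ | n
    · rw [pow_zero] at hn
      obtain ⟨a, b, hab⟩ := hnt
      exact absurd ((Nat.card_eq_one_iff_unique.mp hn).1.allEq a b) hab
    · exact hn ▸ dvd_pow_self p n.succ_ne_zero
  obtain ⟨x, hx⟩ := exists_prime_orderOf_dvd_card' p hdvd
  have hlt : M < comap π (zpowers x) := by
    refine lt_of_le_of_ne (fun m hm => ?_) ?_
    · have : π m = 1 := (QuotientGroup.eq_one_iff m).2 hm
      rw [mem_comap, this]; exact one_mem _
    · intro he
      obtain ⟨g, hg⟩ := hsurj x
      have hgH : g ∈ comap π (zpowers x) := by simp [mem_comap, hg, mem_zpowers]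
      rw [← he] at hgH
      have hx1 : x = 1 := by rw [← hg]; exact (QuotientGroup.eq_one_iff g).2 hgH
      rw [hx1, orderOf_one] at hx
      exact absurd hx.symm hp.one_lt.ne'
  have htop : comap π (zpowers x) = ⊤ := hM.2 _ hlt
  have hzp : zpowers x = ⊤ := by
    have h2 := congrArg (map π) htop
    rwa [map_comap_eq_self_of_surjective hsurj, map_top_of_surjective π hsurj] at h2
  have hcard : Nat.card (G ⧸ M) = p := by
    rw [← hx, ← Nat.card_zpowers, hzp, card_top]
  have hcyc : IsCyclic (G ⧸ M) := isCyclic_of_prime_card hcard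
  have hcomm : ∀ a b : G ⧸ M, a * b = b * a := fun a b =>
    letI := hcyc.commGroup; mul_comm a b
  intro g
  constructor
  · refine (QuotientGroup.eq_one_iff _).1 ?_
    show π (g ^ p) = 1
    rw [map_pow, ← hcard, pow_card_eq_one']
  · intro g'
    have h3 : π ⁅g, g'⁆ = 1 := by
      rw [map_commutatorElement, commutatorElement_eq_one_iff_mul_comm.2 (hcomm _ _)]
    exact (QuotientGroup.eq_one_iff _).1 h3

lemma mem_frattini_of_forall' {G : Type*} [Group G] {x : G}
    (h : ∀ K : Subgroup G, IsCoatom K → x ∈ K) : x ∈ frattini G := by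
  unfold frattini Order.radical
  exact Subgroup.mem_iInf.2 fun K => Subgroup.mem_iInf.2 fun hK => h K hK

lemma cyclic_of_quot_frattini' {G : Type*} [Group G] [Finite G]
    (hc : IsCyclic (G ⧸ frattini G)) : IsCyclic G := by
  obtain ⟨q, hq⟩ := hc.exists_generator
  obtain ⟨g, hg⟩ := QuotientGroup.mk'_surjective (frattini G) q
  have hsup : zpowers g ⊔ frattini G = ⊤ := by
    rw [eq_top_iff]
    intro y _
    obtain ⟨n, hn⟩ := hq (QuotientGroup.mk' (frattini G) y)
    have heq : ((g ^ n : G) : G ⧸ frattini G) = (y : G ⧸ frattini G) := by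
      show (QuotientGroup.mk' (frattini G)) (g ^ n) = _
      rw [map_zpow, hg]
      exact hn
    have hmem : (g ^ n)⁻¹ * y ∈ frattini G := QuotientGroup.eq.1 heq
    have hy : y = g ^ n * ((g ^ n)⁻¹ * y) := by group
    rw [hy]
    exact mul_mem ((le_sup_left : zpowers g ≤ _) (zpow_mem (mem_zpowers g) n))
      ((le_sup_right : frattini G ≤ _) hmem)
  have htop := frattini_nongenerating hsup
  refine ⟨⟨g, fun x => ?_⟩⟩
  show x ∈ zpowers g
  rw [htop]
  exact mem_top x

lemma counting_lemma' {p : ℕ} (hp : p.Prime) {Q : Type*} [Group Q] [Finite Q]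
    (hQ : IsPGroup p Q) (hnc : ¬ IsCyclic Q) (hexp : ∀ x : Q, x ^ p = 1) :
    2 * Nat.card Q < ∑ᶠ K : Subgroup Q, Nat.card K := by
  haveI : Fact p.Prime := ⟨hp⟩
  haveI : Fintype Q := Fintype.ofFinite Q
  haveI : Fintype (Subgroup Q) := Fintype.ofFinite _
  haveI : DecidableEq Q := Classical.decEq Q
  haveI : DecidableEq (Subgroup Q) := Classical.decEq _
  haveI : Nontrivial Q := Nontrivial.of_not_isCyclic hnc
  obtain ⟨d, hd⟩ := IsPGroup.iff_card.mp hQ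
  have hd2 : 2 ≤ d := by
    by_contra hlt
    push_neg at hlt
    interval_cases d
    · rw [pow_zero] at hd
      exact hnc (@isCyclic_of_subsingleton Q _ (Nat.card_eq_one_iff_unique.mp hd).1)
    · rw [pow_one] at hd
      exact hnc (isCyclic_of_prime_card hd)
  have hp1 : 1 ≤ p - 1 := Nat.le_sub_one_of_lt hp.one_lt
  set E : Finset Q := Finset.univ.erase 1 with hE
  have hcardE : #E = p ^ d - 1 := by
    rw [hE, card_erase_of_mem (mem_univ 1), card_univ, ← Nat.card_eq_fintype_card, hd]
  have horder : ∀ x ∈ E, Nat.card (zpowers x) = p := by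
    intro x hx
    rw [Nat.card_zpowers]
    exact orderOf_eq_prime (hexp x) (ne_of_mem_erase hx)
  set I : Finset (Subgroup Q) := E.image (fun x => zpowers x) with hI
  have hfiber : ∀ K ∈ I, #{a ∈ E | zpowers a = K} ≤ p - 1 := by
    intro K hK
    obtain ⟨x₀, hx₀, hKx⟩ := Finset.mem_image.1 hK
    have hcardK : Nat.card K = p := hKx ▸ horder x₀ hx₀
    haveI : DecidablePred (· ∈ K) := fun _ => Classical.dec _
    have hKFcard : #({a ∈ (univ : Finset Q) | a ∈ K}) = p := by
      rw [← Fintype.card_subtype, ← Nat.card_eq_fintype_card]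
      exact hcardK
    have hsub : {a ∈ E | zpowers a = K} ⊆ ({a ∈ (univ : Finset Q) | a ∈ K}).erase 1 := by
      intro a ha
      obtain ⟨haE, haK⟩ := Finset.mem_filter.1 ha
      exact Finset.mem_erase.2 ⟨ne_of_mem_erase haE,
        Finset.mem_filter.2 ⟨mem_univ a, haK ▸ mem_zpowers a⟩⟩
    calc #{a ∈ E | zpowers a = K} ≤ #(({a ∈ (univ : Finset Q) | a ∈ K}).erase 1) :=
          card_le_card hsub
      _ = p - 1 := by
          rw [card_erase_of_mem (Finset.mem_filter.2 ⟨mem_univ 1, K.one_mem⟩), hKFcard]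
  have hcount : p ^ (d - 1) ≤ #I := by
    have h1 : #E ≤ (p - 1) * #I := card_le_mul_card_image E (p - 1) hfiber
    have h2 : (p - 1) * p ^ (d - 1) ≤ (p - 1) * #I := by
      refine le_trans ?_ (hcardE ▸ h1)
      have hx1 : 1 ≤ p ^ (d - 1) := Nat.one_le_pow _ _ hp.pos
      have hpd : p ^ d = p * p ^ (d - 1) := by
        rw [← pow_succ']
        congr 1
        omega
      have : (p - 1) * p ^ (d - 1) = p ^ d - p ^ (d - 1) := by
        rw [Nat.sub_mul, one_mul, ← hpd]
      rw [this]
      exact Nat.sub_le_sub_left hx1 _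
    exact Nat.le_of_mul_le_mul_left h2 (by omega)
  have hsum : ∑ᶠ K : Subgroup Q, Nat.card K = ∑ K : Subgroup Q, Nat.card K :=
    finsum_eq_sum_of_fintype _
  rw [hsum]
  have hcardI : ∀ K ∈ I, Nat.card K = p := by
    intro K hK
    obtain ⟨x, hx, hxe⟩ := Finset.mem_image.1 hK
    exact hxe ▸ horder x hx
  have hbotI : (⊥ : Subgroup Q) ∉ I := by
    intro hb
    have := hcardI ⊥ hb
    rw [Subgroup.card_bot] at this
    exact hp.one_lt.ne this
  have htopI : (⊤ : Subgroup Q) ∉ I := by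
    intro ht
    have h1 := hcardI ⊤ ht
    rw [Subgroup.card_top, hd] at h1
    have : p < p ^ d := by
      calc p = p ^ 1 := (pow_one p).symm
        _ < p ^ d := Nat.pow_lt_pow_right hp.one_lt (by omega)
    omega
  have hbotne : (⊥ : Subgroup Q) ∉ insert ⊤ I :=
    fun hb => (Finset.mem_insert.1 hb).elim (fun e => bot_ne_top e) hbotI
  have hIsum : ∑ K ∈ I, Nat.card K = #I * p := by
    rw [Finset.sum_congr rfl hcardI, Finset.sum_const, smul_eq_mul]
  have hle : ∑ K ∈ insert ⊥ (insert ⊤ I), Nat.card K ≤ ∑ K : Subgroup Q, Nat.card K :=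
    Finset.sum_le_sum_of_subset (Finset.subset_univ _)
  rw [Finset.sum_insert hbotne, Finset.sum_insert htopI, Subgroup.card_bot, Subgroup.card_top,
    hIsum, hd] at hle
  have hIp : p ^ d ≤ #I * p := by
    calc p ^ d = p ^ (d - 1) * p := by
          rw [← pow_succ]
          congr 1
          omega
      _ ≤ #I * p := Nat.mul_le_mul_right p hcount
  omega

end Aux

/-- The sum of the orders of all normal subgroups of `G`. -/
noncomputable def normalSum (G : Type*) [Group G] : ℕ :=
  ∑ᶠ (H : Subgroup G) (_ : H.Normal), Nat.card H

section Aux2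

lemma card_comap_eq' {G : Type*} [Group G] [Finite G] (N : Subgroup G) [N.Normal]
    (K : Subgroup (G ⧸ N)) :
    Nat.card (comap (QuotientGroup.mk' N) K) = Nat.card N * Nat.card K := by
  set π := QuotientGroup.mk' N
  have hsurj : Function.Surjective π := QuotientGroup.mk'_surjective N
  have h1 : (comap π K).index = K.index := index_comap_of_surjective K hsurj
  have h2 : Nat.card (comap π K) * (comap π K).index = Nat.card G := card_mul_index _
  have h3 : Nat.card K * K.index = Nat.card (G ⧸ N) := card_mul_index _
  have h4 : Nat.card G = Nat.card (G ⧸ N) * Nat.card N :=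
    Subgroup.card_eq_card_quotient_mul_card_subgroup N
  have h5 : K.index ≠ 0 := Subgroup.index_ne_zero_of_finite
  refine Nat.eq_of_mul_eq_mul_right (Nat.pos_of_ne_zero h5) ?_
  rw [h1] at h2
  rw [h2, h4, ← h3]
  ring

lemma normalSum_ge_lift' {G : Type*} [Group G] [Finite G] (N : Subgroup G) [N.Normal]
    (hcomm : ∀ a b : G ⧸ N, a * b = b * a) :
    Nat.card N * ∑ᶠ K : Subgroup (G ⧸ N), Nat.card K ≤ normalSum G := by
  haveI : Fintype (Subgroup G) := Fintype.ofFinite _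
  haveI : Fintype (Subgroup (G ⧸ N)) := Fintype.ofFinite _
  haveI : DecidableEq (Subgroup G) := Classical.decEq _
  haveI : DecidablePred (fun H : Subgroup G => H.Normal) := fun _ => Classical.dec _
  set π := QuotientGroup.mk' N
  have hsurj : Function.Surjective π := QuotientGroup.mk'_surjective N
  have hns : normalSum G = ∑ H ∈ Finset.univ.filter (fun H : Subgroup G => H.Normal),
      Nat.card H := by
    unfold normalSum
    refine finsum_cond_eq_sum_of_cond_iff _ fun {H} _ => ?_
    simp [Finset.mem_filter]
  rw [hns, finsum_eq_sum_of_fintype, Finset.mul_sum]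
  calc ∑ K : Subgroup (G ⧸ N), Nat.card N * Nat.card K
      = ∑ K : Subgroup (G ⧸ N), Nat.card (comap π K) := by
        refine Finset.sum_congr rfl fun K _ => (card_comap_eq' N K).symm
    _ = ∑ H ∈ Finset.univ.image (fun K => comap π K), Nat.card H := by
        rw [Finset.sum_image]
        intro K _ K' _ hKK'
        exact comap_injective hsurj hKK'
    _ ≤ ∑ H ∈ Finset.univ.filter (fun H : Subgroup G => H.Normal), Nat.card H := by
        refine Finset.sum_le_sum_of_subset fun H hH => ?_
        obtain ⟨K, _, hK⟩ := Finset.mem_image.1 hH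
        have hKn : K.Normal := ⟨fun n hn g => by
          rw [hcomm g n, mul_assoc, mul_inv_cancel, mul_one]; exact hn⟩
        exact Finset.mem_filter.2 ⟨Finset.mem_univ H, hK ▸ hKn.comap π⟩

lemma card_injective_of_cyclic' {α : Type*} [Group α] [Finite α] [IsCyclic α] :
    Function.Injective (fun H : Subgroup α => Nat.card H) := by
  haveI : Fintype α := Fintype.ofFinite α
  haveI : DecidableEq α := Classical.decEq α
  haveI : ∀ J : Subgroup α, DecidablePred (fun a => a ∈ J) := fun _ _ => Classical.dec _
  intro H K hcard
  simp only at hcard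
  have key : ∀ (J : Subgroup α), {a ∈ (univ : Finset α) | a ∈ J} =
      {a ∈ (univ : Finset α) | a ^ Nat.card J = 1} := by
    intro J
    refine Finset.eq_of_subset_of_card_le ?_ ?_
    · intro a ha
      have haJ : a ∈ J := (Finset.mem_filter.1 ha).2
      have h0 : (⟨a, haJ⟩ : J) ^ Nat.card J = 1 := pow_card_eq_one'
      refine Finset.mem_filter.2 ⟨mem_univ a, ?_⟩
      have h4 := Subtype.ext_iff.1 h0
      rwa [SubmonoidClass.coe_pow, OneMemClass.coe_one] at h4
    · have h1 : #({a ∈ (univ : Finset α) | a ∈ J}) = Nat.card J := by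
        rw [← Fintype.card_subtype, ← Nat.card_eq_fintype_card]
      have h2 : #({a ∈ (univ : Finset α) | a ^ Nat.card J = 1}) ≤ Nat.card J :=
        IsCyclic.card_pow_eq_one_le Nat.card_pos
      omega
  have hHK : {a ∈ (univ : Finset α) | a ∈ H} = {a ∈ (univ : Finset α) | a ∈ K} := by
    rw [key H, key K, hcard]
  ext x
  have := Finset.ext_iff.1 hHK x
  simp only [Finset.mem_filter, Finset.mem_univ, true_and] at this
  exact this

lemma geomSum_le_two_mul' {p : ℕ} (hp : 2 ≤ p) (n : ℕ) :
    ∑ i ∈ range (n + 1), p ^ i ≤ 2 * p ^ n := by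
  induction n with
  | zero => simp
  | succ n ih =>
    rw [Finset.sum_range_succ]
    have h1 : 2 * p ^ n ≤ p ^ (n + 1) := by
      have h := Nat.mul_le_mul_right (p ^ n) hp
      rw [pow_succ, mul_comm (p ^ n) p]
      omega
    omega

lemma normalSum_le_of_cyclic' {p : ℕ} (hp : p.Prime) {G : Type*} [Group G] [Finite G]
    (h : IsPGroup p G) (hc : IsCyclic G) : normalSum G ≤ 2 * Nat.card G := by
  haveI : Fact p.Prime := ⟨hp⟩
  haveI : Fintype (Subgroup G) := Fintype.ofFinite _
  haveI : DecidableEq (Subgroup G) := Classical.decEq _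
  haveI : DecidablePred (fun H : Subgroup G => H.Normal) := fun _ => Classical.dec _
  obtain ⟨n, hn⟩ := IsPGroup.iff_card.mp h
  have hns : normalSum G = ∑ H ∈ Finset.univ.filter (fun H : Subgroup G => H.Normal),
      Nat.card H := by
    unfold normalSum
    refine finsum_cond_eq_sum_of_cond_iff _ fun {H} _ => ?_
    simp [Finset.mem_filter]
  rw [hns]
  calc ∑ H ∈ Finset.univ.filter (fun H : Subgroup G => H.Normal), Nat.card H
      ≤ ∑ H : Subgroup G, Nat.card H :=
        Finset.sum_le_sum_of_subset (Finset.filter_subset _ _)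
    _ = ∑ d ∈ Finset.univ.image (fun H : Subgroup G => Nat.card H), d := by
        rw [Finset.sum_image (fun K _ K' _ hKK' => card_injective_of_cyclic' hKK')]
    _ ≤ ∑ d ∈ (Nat.card G).divisors, d := by
        refine Finset.sum_le_sum_of_subset fun d hd => ?_
        obtain ⟨H, _, hH⟩ := Finset.mem_image.1 hd
        exact Nat.mem_divisors.2 ⟨hH ▸ Subgroup.card_subgroup_dvd_card H, Nat.card_pos.ne'⟩
    _ ≤ 2 * Nat.card G := by
        rw [hn, Nat.sum_divisors_prime_pow hp]
        exact geomSum_le_two_mul' hp.two_le n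

end Aux2

theorem pGroup_mem_C3_iff_cyclic (p : ℕ) (hp : p.Prime) (G : Type*) [Group G] [Finite G]
    (h : IsPGroup p G) :
    normalSum G ≤ 2 * Nat.card G ↔ IsCyclic G := by
  constructor
  · intro hle
    by_contra hnc
    haveI : Fact p.Prime := ⟨hp⟩
    set Φ := frattini G with hΦ
    haveI : Φ.Normal := inferInstance
    have hppow : ∀ g : G, g ^ p ∈ Φ := fun g =>
      mem_frattini_of_forall' (fun K hK => (coatom_facts' hp h hK g).1)
    have hcommM : ∀ g g' : G, ⁅g, g'⁆ ∈ Φ := fun g g' =>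
      mem_frattini_of_forall' (fun K hK => (coatom_facts' hp h hK g).2 g')
    set π := QuotientGroup.mk' Φ with hπ
    have hsurj : Function.Surjective π := QuotientGroup.mk'_surjective Φ
    have hexp : ∀ x : G ⧸ Φ, x ^ p = 1 := by
      intro x
      obtain ⟨g, hg⟩ := hsurj x
      rw [← hg, ← map_pow]
      exact (QuotientGroup.eq_one_iff _).2 (hppow g)
    have hcomm : ∀ a b : G ⧸ Φ, a * b = b * a := by
      intro a b
      obtain ⟨g, hg⟩ := hsurj a
      obtain ⟨g', hg'⟩ := hsurj b
      rw [← hg, ← hg']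
      refine commutatorElement_eq_one_iff_mul_comm.1 ?_
      rw [← map_commutatorElement]
      exact (QuotientGroup.eq_one_iff _).2 (hcommM g g')
    have hQnc : ¬ IsCyclic (G ⧸ Φ) := fun hc => hnc (cyclic_of_quot_frattini' hc)
    have hQp : IsPGroup p (G ⧸ Φ) := h.to_quotient Φ
    have hcnt := counting_lemma' hp hQp hQnc hexp
    have hlift := normalSum_ge_lift' Φ hcomm
    have hcardG : Nat.card G = Nat.card (G ⧸ Φ) * Nat.card Φ :=
      Subgroup.card_eq_card_quotient_mul_card_subgroup Φ
    have hpos : 0 < Nat.card Φ := Nat.card_pos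
    have : Nat.card Φ * (2 * Nat.card (G ⧸ Φ)) <
        Nat.card Φ * ∑ᶠ K : Subgroup (G ⧸ Φ), Nat.card K :=
      (Nat.mul_lt_mul_left hpos).2 hcnt
    have h2G : 2 * Nat.card G = Nat.card Φ * (2 * Nat.card (G ⧸ Φ)) := by
      rw [hcardG]; ring
    omega
  · exact normalSum_le_of_cyclic' hp h
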